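/- arXiv:1412.5434 — 6 statements merged into one kernel-verified Lean document; each statement's English description precedes it below -/
import Mathlib

section
/- If G is a lattice-ordered group (an ℓ-group, i.e., a po-group whose partial order is a lattice), then ℤ ⋉_φ G^I with the lexicographic order is a lattice-ordered group. -/
open Function

variable {I G : Type*}

def kmul [Mul G] (φ : Equiv.Perm I) (p q : ℤ × (I → G)) : ℤ × (I → G) :=
  (p.1 + q.1, fun i => p.2 i * q.2 ((φ ^ p.1) i))

def kone [One G] : ℤ × (I → G) := (0, fun _ => 1)

def kinv [Inv G] (φ : Equiv.Perm I) (p : ℤ × (I → G)) : ℤ × (I → G) :=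
  (-p.1, fun i => (p.2 ((φ ^ (-p.1)) i))⁻¹)

def kle [LE G] (p q : ℤ × (I → G)) : Prop :=
  p.1 < q.1 ∨ (p.1 = q.1 ∧ ∀ i, p.2 i ≤ q.2 i)

/-- if `G` is a lattice-ordered group, then `ℤ ⋉_φ G^I` with the
lexicographic order is a lattice-ordered group: it is a group, the lexicographic
order is a partial order compatible with multiplication on both sides, and any
two elements have a least upper bound and a greatest lower bound. -/
theorem stmt6 [Group G] [Lattice G]
    [CovariantClass G G (· * ·) (· ≤ ·)] [CovariantClass G G (swap (· * ·)) (· ≤ ·)]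
    (φ : Equiv.Perm I) :
    (∀ p q r : ℤ × (I → G), kmul φ (kmul φ p q) r = kmul φ p (kmul φ q r)) ∧
    (∀ p : ℤ × (I → G), kmul φ kone p = p ∧ kmul φ p kone = p) ∧
    (∀ p : ℤ × (I → G), kmul φ p (kinv φ p) = kone ∧ kmul φ (kinv φ p) p = kone) ∧
    (∀ p : ℤ × (I → G), kle p p) ∧
    (∀ p q : ℤ × (I → G), kle p q → kle q p → p = q) ∧
    (∀ p q r : ℤ × (I → G), kle p q → kle q r → kle p r) ∧
    (∀ z z' w w' : ℤ × (I → G), kle z z' →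
      kle (kmul φ (kmul φ w z) w') (kmul φ (kmul φ w z') w')) ∧
    (∀ p q : ℤ × (I → G),
      ∃ s, kle p s ∧ kle q s ∧ ∀ t, kle p t → kle q t → kle s t) ∧
    (∀ p q : ℤ × (I → G),
      ∃ m, kle m p ∧ kle m q ∧ ∀ t, kle t p → kle t q → kle t m) := by
  have key : ∀ (a b : ℤ) (i : I), (φ ^ (a + b)) i = (φ ^ b) ((φ ^ a) i) := by
    intro a b i
    rw [add_comm, zpow_add, Equiv.Perm.mul_apply]
  refine ⟨?_, ?_, ?_, ?_, ?_, ?_, ?_, ?_, ?_⟩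
  · intro p q r
    unfold kmul
    refine Prod.ext (add_assoc _ _ _) (funext fun i => ?_)
    simp only
    rw [key, mul_assoc]
  · intro p
    constructor
    · unfold kmul kone
      exact Prod.ext (zero_add _) (funext fun i => by simp)
    · unfold kmul kone
      exact Prod.ext (add_zero _) (funext fun i => by simp)
  · intro p
    constructor
    · unfold kmul kinv kone
      refine Prod.ext (add_neg_cancel _) (funext fun i => ?_)
      simp only
      rw [← key]
      simp
    · unfold kmul kinv kone
      exact Prod.ext (neg_add_cancel _) (funext fun i => by simp)
  · intro p; exact Or.inr ⟨rfl, fun i => le_rfl⟩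
  · intro p q h1 h2
    rcases h1 with h1 | ⟨h1, h1'⟩ <;> rcases h2 with h2 | ⟨h2, h2'⟩ <;>
      first
        | omega
        | exact Prod.ext h1 (funext fun i => le_antisymm (h1' i) (h2' i))
  · intro p q r h1 h2
    rcases h1 with h1 | ⟨h1, h1'⟩ <;> rcases h2 with h2 | ⟨h2, h2'⟩
    · exact Or.inl (h1.trans h2)
    · exact Or.inl (h2 ▸ h1)
    · exact Or.inl (h1 ▸ h2)
    · exact Or.inr ⟨h1.trans h2, fun i => (h1' i).trans (h2' i)⟩
  · intro z z' w w' h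
    rcases h with h | ⟨h1, h2⟩
    · exact Or.inl (by simp only [kmul]; omega)
    · refine Or.inr ⟨by simp only [kmul]; omega, fun i => ?_⟩
      simp only [kmul, h1]
      exact mul_le_mul_left (mul_le_mul_right (h2 _) _) _
  · intro p q
    rcases lt_trichotomy p.1 q.1 with h | h | h
    · exact ⟨q, Or.inl h, Or.inr ⟨rfl, fun i => le_rfl⟩, fun t _ hq => hq⟩
    · refine ⟨(p.1, fun i => p.2 i ⊔ q.2 i), Or.inr ⟨rfl, fun i => le_sup_left⟩,
        Or.inr ⟨h.symm, fun i => le_sup_right⟩, fun t hp hq => ?_⟩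
      rcases hp with hp | ⟨hp1, hp2⟩
      · exact Or.inl hp
      · rcases hq with hq | ⟨hq1, hq2⟩
        · omega
        · exact Or.inr ⟨hp1, fun i => sup_le (hp2 i) (hq2 i)⟩
    · exact ⟨p, Or.inr ⟨rfl, fun i => le_rfl⟩, Or.inl h, fun t hp _ => hp⟩
  · intro p q
    rcases lt_trichotomy p.1 q.1 with h | h | h
    · exact ⟨p, Or.inr ⟨rfl, fun i => le_rfl⟩, Or.inl h, fun t hp _ => hp⟩
    · refine ⟨(p.1, fun i => p.2 i ⊓ q.2 i), Or.inr ⟨rfl, fun i => inf_le_left⟩,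
        Or.inr ⟨h, fun i => inf_le_right⟩, fun t hp hq => ?_⟩
      rcases hp with hp | ⟨hp1, hp2⟩
      · exact Or.inl hp
      · rcases hq with hq | ⟨hq1, hq2⟩
        · omega
        · exact Or.inr ⟨hp1, fun i => le_inf (hp2 i) (hq2 i)⟩
    · exact ⟨q, Or.inl h, Or.inr ⟨rfl, fun i => le_rfl⟩, fun t _ hq => hq⟩
end

section
/- The sets E₀, E₁, …, E_n are pairwise disjoint and their union is E = [0̄, u_n]; whenever 0 ≤ k < j ≤ n, every element of E_k is ≤ every element of E_j; for k, j ≥ 0 with k + j < n one has {a * b : a ∈ E_k, b ∈ E_j} = E_{k+j} (in particular every such product lies in E); and for k + j > n no product a * b with a ∈ E_k, b ∈ E_j lies in E. -/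
open Function

variable {I G : Type*}

def kunit [One G] (n : ℤ) : ℤ × (I → G) := (n, fun _ => 1)

/-- The interval `E = [0̄, u_n]` in `ℤ ⋉_φ G^I`. -/
def kE [One G] [LE G] (n : ℤ) : Set (ℤ × (I → G)) :=
  {z | kle kone z ∧ kle z (kunit n)}

/-- The slice `E_k = {z ∈ E : the first coordinate of z is k}`. -/
def kEk [One G] [LE G] (n k : ℤ) : Set (ℤ × (I → G)) :=
  {z | z ∈ kE n ∧ z.1 = k}

/-- the slices `E₀, …, E_n` are pairwise disjoint with union `E`;
`E_k ⪯ E_j` for `k < j`; `E_k * E_j = E_{k+j}` when `k + j < n`; and no product of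
an element of `E_k` with an element of `E_j` lies in `E` when `k + j > n`. -/
theorem stmt7 [Group G] [PartialOrder G]
    [CovariantClass G G (· * ·) (· ≤ ·)] [CovariantClass G G (swap (· * ·)) (· ≤ ·)]
    (φ : Equiv.Perm I) (n : ℤ) (hn : 1 ≤ n) :
    (∀ k j : ℤ, k ≠ j → kEk (I := I) (G := G) n k ∩ kEk n j = ∅) ∧
    (∀ z : ℤ × (I → G), z ∈ kE n ↔ ∃ k : ℤ, 0 ≤ k ∧ k ≤ n ∧ z ∈ kEk n k) ∧
    (∀ k j : ℤ, 0 ≤ k → k < j → j ≤ n →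
      ∀ a ∈ kEk (I := I) (G := G) n k, ∀ b ∈ kEk n j, kle a b) ∧
    (∀ k j : ℤ, 0 ≤ k → 0 ≤ j → k + j < n →
      (∀ a ∈ kEk (I := I) (G := G) n k, ∀ b ∈ kEk n j, kmul φ a b ∈ kEk n (k + j)) ∧
      (∀ c ∈ kEk (I := I) (G := G) n (k + j),
        ∃ a ∈ kEk n k, ∃ b ∈ kEk n j, kmul φ a b = c)) ∧
    (∀ k j : ℤ, 0 ≤ k → 0 ≤ j → n < k + j →
      ∀ a ∈ kEk (I := I) (G := G) n k, ∀ b ∈ kEk n j, kmul φ a b ∉ kE n) := by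
  have hn0 : (0:ℤ) < n := hn
  refine ⟨?_, ?_, ?_, ?_, ?_⟩
  · intro k j hkj
    ext z
    simp only [kEk, Set.mem_inter_iff, Set.mem_setOf_eq, Set.mem_empty_iff_false, iff_false]
    rintro ⟨⟨_, hk⟩, _, hj⟩
    exact hkj (hk.symm.trans hj)
  · intro z
    constructor
    · intro hz
      refine ⟨z.1, ?_, ?_, hz, rfl⟩
      · rcases hz.1 with h | ⟨h, _⟩
        · exact le_of_lt h
        · exact le_of_eq h
      · rcases hz.2 with h | ⟨h, _⟩
        · exact le_of_lt h
        · exact le_of_eq h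
    · rintro ⟨k, _, _, hz, _⟩; exact hz
  · intro k j hk hkj hjn a ha b hb
    left
    rw [ha.2, hb.2]
    exact hkj
  · intro k j hk hj hkjn
    constructor
    · rintro a ⟨⟨ha1, ha2⟩, hak⟩ b ⟨⟨hb1, hb2⟩, hbj⟩
      have hfst : (kmul φ a b).1 = k + j := by simp [kmul, hak, hbj]
      refine ⟨⟨?_, ?_⟩, hfst⟩
      · rcases eq_or_lt_of_le (add_nonneg hk hj) with h0 | h0
        · -- k + j = 0, hence k = 0 and j = 0
          have hk0 : k = 0 := by omega
          have hj0 : j = 0 := by omega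
          right
          refine ⟨by rw [hfst, ← h0]; rfl, ?_⟩
          have ha2' : ∀ i, (1:G) ≤ a.2 i := by
            rcases ha1 with h | ⟨_, h⟩
            · exfalso; rw [hak, hk0] at h; exact lt_irrefl _ h
            · exact h
          have hb2' : ∀ i, (1:G) ≤ b.2 i := by
            rcases hb1 with h | ⟨_, h⟩
            · exfalso; rw [hbj, hj0] at h; exact lt_irrefl _ h
            · exact h
          intro i
          exact one_le_mul (ha2' i) (hb2' _)
        · left
          rw [hfst]; exact h0
      · left
        rw [hfst]; exact hkjn
    · rintro ⟨c1, c2⟩ ⟨⟨hc1, hc2⟩, hck⟩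
      simp only at hck
      subst hck
      rcases eq_or_lt_of_le hk with hk0 | hk0
      · -- k = 0 : take a = kone, b = c
        refine ⟨kone, ⟨⟨Or.inr ⟨rfl, fun i => le_refl 1⟩, Or.inl hn0⟩, hk0⟩,
          (k + j, c2), ⟨⟨hc1, hc2⟩, by omega⟩, ?_⟩
        simp [kmul, kone]
      · -- k > 0 : take a = (k, c2), b = (j, 1)
        refine ⟨(k, c2), ⟨⟨Or.inl hk0, Or.inl (by simp only [kunit]; omega)⟩, rfl⟩,
          (j, fun _ => 1), ⟨⟨?_, Or.inl (by simp only [kunit]; omega)⟩, rfl⟩, ?_⟩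
        · rcases eq_or_lt_of_le hj with hj0 | hj0
          · exact Or.inr ⟨hj0, fun i => le_refl 1⟩
          · exact Or.inl hj0
        · simp [kmul]
  · rintro k j hk hj hnkj a ⟨⟨ha1, _⟩, hak⟩ b ⟨_, hbj⟩ ⟨h1, h2⟩
    rcases h2 with h | ⟨h, _⟩
    · simp only [kmul, kunit, hak, hbj] at h
      omega
    · simp only [kmul, kunit, hak, hbj] at h
      omega
end

section
/- Assume G is a directed po-group and n ≥ 1. Then E₀ is a normal ideal of E = [0̄, u_n] with E₀ ≠ E, and every ideal J of E containing an element not belonging to E₀ equals E. Consequently E₀ is the unique maximal ideal of E (an ideal is maximal if it is proper and every ideal properly containing it equals E). -/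
open Function

variable {I G : Type*}

/-- An ideal of `E = [0̄, u_n]`: a nonempty subset `J ⊆ E` closed under products
staying below `u_n` and downward closed in `E`. -/
def kIsIdeal [Group G] [PartialOrder G] (φ : Equiv.Perm I) (n : ℤ)
    (J : Set (ℤ × (I → G))) : Prop :=
  J.Nonempty ∧ J ⊆ kE n ∧
  (∀ a ∈ J, ∀ b ∈ J, kle (kmul φ a b) (kunit n) → kmul φ a b ∈ J) ∧
  (∀ a ∈ kE n, ∀ b ∈ J, kle a b → a ∈ J)

/-- A normal ideal of `E`: for every `z ∈ E`,
`{z*a : a ∈ J, z*a ≤ u_n} = {b*z : b ∈ J, b*z ≤ u_n}`. -/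
def kIsNormalIdeal [Group G] [PartialOrder G] (φ : Equiv.Perm I) (n : ℤ)
    (J : Set (ℤ × (I → G))) : Prop :=
  kIsIdeal φ n J ∧
  ∀ z ∈ kE n,
    {w | ∃ a ∈ J, kmul φ z a = w ∧ kle w (kunit n)} =
    {w | ∃ b ∈ J, kmul φ b z = w ∧ kle w (kunit n)}


/-!
A degree-`0` element of `E` is a coordinatewise positive family, so `E₀` is the positive cone
of `G^I`: closed under products and downward closed in `E`; since the cone is invariant under
conjugation, `z * a = (z a z⁻¹) * z` gives normality. Conversely, if an ideal `J` contains `x`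
of degree `k ≥ 1`, then all of `E₀` lies below `x`, so `E₀ ⊆ J`. Multiplying `x` on the left by
a positive `a` of degree `0` with `a ≥ x⁻¹` (directedness), or by `a = x⁻¹` when `k = n`, lifts
it above `u_k`. Hence `u_k`, then `u_1 ≤ u_k`, then `u_1 ^ n = u_n`, the top of `E`, lie in `J`.
-/

section Maximal

variable {α : Type*} {P : Set α → Prop} {M T J : Set α}

theorem eq_of_forall_ssuperset_eq_of_forall_not_subset (hM : P M) (hMT : M ≠ T)
    (hout : ∀ J, P J → ¬J ⊆ M → J = T) (hJ : P J) (hJT : J ≠ T)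
    (hmax : ∀ J', P J' → J ⊂ J' → J' = T) : J = M := by
  have hJM : J ⊆ M := by_contra fun h => hJT (hout J hJ h)
  by_contra hne
  exact hMT (hmax M hM (hJM.ssubset_of_ne hne))

end Maximal

section Order

variable [LE G] {p q : ℤ × (I → G)}

theorem kle.fst_le (h : kle p q) : p.1 ≤ q.1 := by
  rcases h with h | ⟨h, -⟩ <;> omega

theorem kle_of_fst_lt (h : p.1 < q.1) : kle p q := Or.inl h

theorem kle_of_fst_eq (h : p.1 = q.1) (h' : ∀ i, p.2 i ≤ q.2 i) : kle p q := Or.inr ⟨h, h'⟩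

theorem kle.snd_le (hpq : kle p q) (h : p.1 = q.1) (i : I) : p.2 i ≤ q.2 i := by
  rcases hpq with hlt | ⟨-, h'⟩
  · omega
  · exact h' i

end Order

section Interval

variable [One G] [Preorder G] {n : ℤ} {z : ℤ × (I → G)}

theorem kle_kunit_kunit {m l : ℤ} (h : m ≤ l) : kle (kunit (I := I) (G := G) m) (kunit l) :=
  h.lt_or_eq.imp id fun e => ⟨e, fun _ => le_rfl⟩

theorem kunit_mem_kE {m : ℤ} (h0 : 0 ≤ m) (hm : m ≤ n) : kunit (I := I) (G := G) m ∈ kE n :=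
  ⟨kle_kunit_kunit h0, kle_kunit_kunit hm⟩

theorem fst_nonneg_of_mem_kE (hz : z ∈ kE n) : 0 ≤ z.1 := hz.1.fst_le

theorem fst_le_of_mem_kE (hz : z ∈ kE n) : z.1 ≤ n := hz.2.fst_le

theorem mem_kEk_zero (hn : 0 < n) : z ∈ kEk n 0 ↔ z.1 = 0 ∧ ∀ i, 1 ≤ z.2 i := by
  constructor
  · rintro ⟨hz, h0⟩
    exact ⟨h0, hz.1.snd_le h0.symm⟩
  · rintro ⟨h0, h1⟩
    exact ⟨⟨kle_of_fst_eq h0.symm h1, kle_of_fst_lt (h0 ▸ hn)⟩, h0⟩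

theorem one_le_fst_of_notMem_kEk_zero (hz : z ∈ kE n) (hz0 : z ∉ kEk n 0) : 1 ≤ z.1 := by
  have := fst_nonneg_of_mem_kE hz
  have : z.1 ≠ 0 := fun h => hz0 ⟨hz, h⟩
  omega

theorem kEk_zero_ne_kE (hn : 0 < n) : kEk (I := I) (G := G) n 0 ≠ kE n := fun h =>
  hn.ne' (h ▸ kunit_mem_kE (I := I) (G := G) hn.le le_rfl).2

end Interval

section Group

variable [Group G] (φ : Equiv.Perm I)

theorem kmul_of_fst_eq_zero {b : ℤ × (I → G)} (hb : b.1 = 0) (z : ℤ × (I → G)) :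
    kmul φ b z = (z.1, fun i => b.2 i * z.2 i) := by
  simp [kmul, hb]

theorem kmul_kunit_kunit (m l : ℤ) : kmul (G := G) φ (kunit m) (kunit l) = kunit (m + l) := by
  simp [kmul, kunit]

variable [PartialOrder G] {φ} {n : ℤ} {J : Set (ℤ × (I → G))}

namespace kIsIdeal

theorem kEk_zero_subset (hJ : kIsIdeal φ n J) {x : ℤ × (I → G)} (hx : x ∈ J)
    (hx1 : 0 < x.1) : kEk n 0 ⊆ J :=
  fun z hz => hJ.2.2.2 z hz.1 x hx (kle_of_fst_lt (hz.2 ▸ hx1))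

theorem eq_kE_of_kunit_mem (hJ : kIsIdeal φ n J) (hu : kunit n ∈ J) : J = kE n :=
  hJ.2.1.antisymm fun z hz => hJ.2.2.2 z hz _ hu hz.2

theorem kunit_mem_of_kunit_one_mem (hJ : kIsIdeal φ n J) (hu : kunit 1 ∈ J) :
    ∀ m, 1 ≤ m → m ≤ n → kunit m ∈ J := by
  intro m hm
  induction m, hm using Int.leInduction with
  | base => exact fun _ => hu
  | succ m _ ih =>
    intro hmn
    have hle : kle (kmul φ (kunit m) (kunit 1)) (kunit (I := I) (G := G) n) := by
      rw [kmul_kunit_kunit]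
      exact kle_kunit_kunit hmn
    simpa [kmul_kunit_kunit] using hJ.2.2.1 _ (ih (by omega)) _ hu hle

end kIsIdeal

variable [MulLeftMono G]

theorem kIsIdeal_kEk_zero (φ : Equiv.Perm I) (hn : 0 < n) :
    kIsIdeal φ n (kEk (I := I) (G := G) n 0) := by
  refine ⟨⟨kone, (mem_kEk_zero hn).2 ⟨rfl, fun _ => le_rfl⟩⟩, fun z hz => hz.1, ?_, ?_⟩
  · intro a ha b hb _
    obtain ⟨ha0, ha1⟩ := (mem_kEk_zero hn).1 ha
    obtain ⟨hb0, hb1⟩ := (mem_kEk_zero hn).1 hb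
    rw [kmul_of_fst_eq_zero φ ha0]
    exact (mem_kEk_zero hn).2 ⟨hb0, fun i => one_le_mul (ha1 i) (hb1 i)⟩
  · intro a ha b hb hab
    exact ⟨ha, le_antisymm (hab.fst_le.trans hb.2.le) (fst_nonneg_of_mem_kE ha)⟩

variable [MulRightMono G]

theorem one_le_mul_mul_inv {a : G} (ha : 1 ≤ a) (g : G) : 1 ≤ g * a * g⁻¹ :=
  calc (1 : G) = g * 1 * g⁻¹ := by group
    _ ≤ g * a * g⁻¹ := mul_le_mul_left (mul_le_mul_right ha g) g⁻¹

theorem exists_kmul_eq_kmul_right (φ : Equiv.Perm I) (z : ℤ × (I → G)) {a : ℤ × (I → G)}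
    (ha0 : a.1 = 0) (ha : ∀ i, 1 ≤ a.2 i) :
    ∃ b : ℤ × (I → G), (b.1 = 0 ∧ ∀ i, 1 ≤ b.2 i) ∧ kmul φ b z = kmul φ z a := by
  refine ⟨(0, fun i => z.2 i * a.2 ((φ ^ z.1) i) * (z.2 i)⁻¹),
    ⟨rfl, fun i => one_le_mul_mul_inv (ha _) _⟩, ?_⟩
  rw [kmul_of_fst_eq_zero φ rfl]
  simp [kmul, ha0]

theorem exists_kmul_eq_kmul_left (φ : Equiv.Perm I) (z : ℤ × (I → G)) {b : ℤ × (I → G)}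
    (hb0 : b.1 = 0) (hb : ∀ i, 1 ≤ b.2 i) :
    ∃ a : ℤ × (I → G), (a.1 = 0 ∧ ∀ i, 1 ≤ a.2 i) ∧ kmul φ z a = kmul φ b z := by
  let w : I → G := fun j => z.2 ((φ ^ z.1).symm j)
  refine ⟨(0, fun j => (w j)⁻¹ * b.2 ((φ ^ z.1).symm j) * w j),
    ⟨rfl, fun j => by simpa using one_le_mul_mul_inv (hb _) (w j)⁻¹⟩, ?_⟩
  rw [kmul_of_fst_eq_zero φ hb0]
  simp [kmul, w, mul_assoc]

theorem kIsNormalIdeal_kEk_zero (φ : Equiv.Perm I) (hn : 0 < n) :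
    kIsNormalIdeal φ n (kEk (I := I) (G := G) n 0) := by
  refine ⟨kIsIdeal_kEk_zero φ hn, fun z _ => Set.ext fun w => ⟨?_, ?_⟩⟩
  · rintro ⟨a, ha, rfl, hw⟩
    obtain ⟨b, hb, e⟩ := exists_kmul_eq_kmul_right φ z ((mem_kEk_zero hn).1 ha).1
      ((mem_kEk_zero hn).1 ha).2
    exact ⟨b, (mem_kEk_zero hn).2 hb, e, hw⟩
  · rintro ⟨b, hb, rfl, hw⟩
    obtain ⟨a, ha, e⟩ := exists_kmul_eq_kmul_left φ z ((mem_kEk_zero hn).1 hb).1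
      ((mem_kEk_zero hn).1 hb).2
    exact ⟨a, (mem_kEk_zero hn).2 ha, e, hw⟩

namespace kIsIdeal

theorem kunit_fst_mem (hJ : kIsIdeal φ n J) (hdir : ∀ a b : G, ∃ c, a ≤ c ∧ b ≤ c)
    {x : ℤ × (I → G)} (hx : x ∈ J) (hx1 : 1 ≤ x.1) : kunit x.1 ∈ J := by
  have hxE := hJ.2.1 hx
  have hn : 0 < n := by have := fst_le_of_mem_kE hxE; omega
  have hE₀ := hJ.kEk_zero_subset hx (by omega)
  rcases (fst_le_of_mem_kE hxE).lt_or_eq with hlt | heq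
  · choose c hc1 hcx using fun i => hdir 1 (x.2 i)⁻¹
    have haJ : ((0 : ℤ), c) ∈ J := hE₀ ((mem_kEk_zero hn).2 ⟨rfl, hc1⟩)
    have hprod := hJ.2.2.1 _ haJ x hx
      (by rw [kmul_of_fst_eq_zero φ rfl]; exact kle_of_fst_lt hlt)
    rw [kmul_of_fst_eq_zero φ rfl] at hprod
    refine hJ.2.2.2 _ (kunit_mem_kE (by omega) hlt.le) _ hprod (kle_of_fst_eq rfl fun i => ?_)
    simpa [kunit] using mul_le_mul_left (hcx i) (x.2 i)
  · have hx_le : ∀ i, x.2 i ≤ 1 := hxE.2.snd_le heq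
    have haJ : ((0 : ℤ), fun i => (x.2 i)⁻¹) ∈ J :=
      hE₀ ((mem_kEk_zero hn).2 ⟨rfl, fun i => one_le_inv'.2 (hx_le i)⟩)
    have hprod : kmul φ ((0 : ℤ), fun i => (x.2 i)⁻¹) x = kunit x.1 := by
      rw [kmul_of_fst_eq_zero φ rfl]
      simp [kunit]
    have hprod_le : kle (kunit (I := I) (G := G) x.1) (kunit n) := kle_kunit_kunit heq.le
    simpa [hprod] using hJ.2.2.1 _ haJ x hx (hprod ▸ hprod_le)

theorem eq_kE_of_notMem_kEk_zero (hJ : kIsIdeal φ n J)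
    (hdir : ∀ a b : G, ∃ c, a ≤ c ∧ b ≤ c) {x : ℤ × (I → G)} (hx : x ∈ J)
    (hx0 : x ∉ kEk n 0) : J = kE n := by
  have hxE := hJ.2.1 hx
  have hx1 := one_le_fst_of_notMem_kEk_zero hxE hx0
  have hxn := fst_le_of_mem_kE hxE
  have hu1 : kunit 1 ∈ J := hJ.2.2.2 _ (kunit_mem_kE zero_le_one (hx1.trans hxn)) _
    (hJ.kunit_fst_mem hdir hx hx1) (kle_kunit_kunit hx1)
  exact hJ.eq_kE_of_kunit_mem (hJ.kunit_mem_of_kunit_one_mem hu1 n (hx1.trans hxn) le_rfl)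

end kIsIdeal

end Group

/-- `E₀` is a normal ideal of `E`, `E₀ ≠ E`, every ideal containing an
element outside `E₀` equals `E`; consequently `E₀` is maximal and it is the unique
maximal ideal of `E` (maximal = proper, and every ideal properly containing it is `E`). -/
theorem stmt9 [Group G] [PartialOrder G]
    [CovariantClass G G (· * ·) (· ≤ ·)] [CovariantClass G G (swap (· * ·)) (· ≤ ·)]
    (hdir : ∀ a b : G, ∃ c, a ≤ c ∧ b ≤ c)
    (φ : Equiv.Perm I) (n : ℤ) (hn : 1 ≤ n) :
    kIsNormalIdeal φ n (kEk (I := I) (G := G) n 0) ∧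
    kEk (I := I) (G := G) n 0 ≠ kE n ∧
    (∀ J : Set (ℤ × (I → G)), kIsIdeal φ n J → (∃ x ∈ J, x ∉ kEk n 0) → J = kE n) ∧
    (kEk (I := I) (G := G) n 0 ≠ kE n ∧
      ∀ J' : Set (ℤ × (I → G)), kIsIdeal φ n J' → kEk n 0 ⊂ J' → J' = kE n) ∧
    (∀ J : Set (ℤ × (I → G)), kIsIdeal φ n J → J ≠ kE n →
      (∀ J' : Set (ℤ × (I → G)), kIsIdeal φ n J' → J ⊂ J' → J' = kE n) →
      J = kEk n 0) := by
  have hn0 : 0 < n := by omega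
  have hout : ∀ J : Set (ℤ × (I → G)), kIsIdeal φ n J → ¬J ⊆ kEk n 0 → J = kE n :=
    fun J hJ h =>
      let ⟨_, hx, hx0⟩ := Set.not_subset.1 h
      hJ.eq_kE_of_notMem_kEk_zero hdir hx hx0
  have hne := kEk_zero_ne_kE (I := I) (G := G) hn0
  refine ⟨kIsNormalIdeal_kEk_zero φ hn0, hne, fun J hJ ⟨x, hx, hx0⟩ =>
    hJ.eq_kE_of_notMem_kEk_zero hdir hx hx0, ⟨hne, fun J' hJ' h => hout J' hJ' h.not_subset⟩,
    fun J hJ hJE hmax => ?_⟩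
  exact eq_of_forall_ssuperset_eq_of_forall_not_subset (kIsIdeal_kEk_zero φ hn0) hne hout hJ hJE
    hmax
end

section
/- Let H be an o-ideal of a directed po-group G, let N = H ∩ G⁺, and let n ≥ 1. Then N^I = {(0, ⟨x_i : i ∈ I⟩) : x_i ∈ N for all i ∈ I} is a normal ideal of E = [0̄, u_n]. Moreover, the set N_f^I of all elements of N^I whose support {i ∈ I : x_i ≠ e} is finite is also a normal ideal of E, and if H ≠ {e} and I is nonempty then N_f^I is nontrivial (N_f^I ≠ {0̄}). -/
open Function

variable {I G : Type*}

/-- An o-ideal of a po-group `G`: a normal, convex and directed subgroup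
(common upper bounds of elements of `H` may be found inside `H`). -/
def IsOIdeal [Group G] [PartialOrder G] (H : Subgroup G) : Prop :=
  (∀ g ∈ H, ∀ x : G, x * g * x⁻¹ ∈ H) ∧
  (∀ a ∈ H, ∀ b ∈ H, ∀ g : G, a ≤ g → g ≤ b → g ∈ H) ∧
  (∀ a ∈ H, ∀ b ∈ H, ∃ c ∈ H, a ≤ c ∧ b ≤ c)

/-- `N^I = {(0, ⟨x_i⟩) : x_i ∈ N for all i}` where `N = H ∩ G⁺`. -/
def NI [Group G] [PartialOrder G] (H : Subgroup G) : Set (ℤ × (I → G)) :=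
  {p | p.1 = 0 ∧ ∀ i, p.2 i ∈ H ∧ 1 ≤ p.2 i}

/-- `N_f^I`: the elements of `N^I` with finite support. -/
def NfI [Group G] [PartialOrder G] (H : Subgroup G) : Set (ℤ × (I → G)) :=
  {p | p ∈ NI H ∧ {i : I | p.2 i ≠ 1}.Finite}

/-! In `ℤ ⋉_φ G^I` an element below an element of level `0` and above `0̄` has level `0` and
is compared coordinatewise, so `N^I` and `N_f^I` are downward closed in `E` by convexity of `H`
and monotonicity of supports, and closed under products because `N` is a submonoid.
For `z = (m, y) ∈ E` and `a = (0, x)`, `z * a = b * z` with `b = (0, ⟨y_i x_{φ^m(i)} y_i⁻¹⟩)`;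
both sets are stable under such twisted conjugations since `H` is normal, conjugation preserves
`G⁺`, and permuting coordinates preserves finiteness of supports. Finally, directedness of `H`
turns some `g ∈ H \ {e}` into some `h ∈ H` with `e < h`, and the point mass at `h` lies in
`N_f^I`. -/

section IsOIdeal

variable [Group G] [PartialOrder G] {H : Subgroup G}

lemma IsOIdeal.conj_mem (hH : IsOIdeal H) {g : G} (hg : g ∈ H) (x : G) : x * g * x⁻¹ ∈ H :=
  hH.1 g hg x

lemma IsOIdeal.mem_of_le_of_le (hH : IsOIdeal H) {a b g : G} (ha : a ∈ H) (hb : b ∈ H)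
    (hag : a ≤ g) (hgb : g ≤ b) : g ∈ H :=
  hH.2.1 a ha b hb g hag hgb

lemma IsOIdeal.exists_one_lt [MulLeftMono G] (hH : IsOIdeal H) (hbot : H ≠ ⊥) :
    ∃ h ∈ H, 1 < h := by
  obtain ⟨g, hgH, hg⟩ := H.bot_or_exists_ne_one.resolve_left hbot
  obtain ⟨c, hcH, hc1, hgc⟩ := hH.2.2 1 H.one_mem g hgH
  obtain ⟨d, hdH, hd1, hgd⟩ := hH.2.2 1 H.one_mem g⁻¹ (H.inv_mem hgH)
  by_cases hc : c = 1
  · refine ⟨d, hdH, hd1.lt_of_ne fun hd => hg ?_⟩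
    subst hc hd
    exact le_antisymm hgc (inv_le_one'.1 hgd)
  · exact ⟨c, hcH, hc1.lt_of_ne (Ne.symm hc)⟩

end IsOIdeal

lemma one_le_conj [Group G] [PartialOrder G] [MulLeftMono G] [MulRightMono G] {a : G}
    (h : 1 ≤ a) (z : G) : 1 ≤ z * a * z⁻¹ := by
  simpa using mul_le_mul_left (mul_le_mul_right h z) z⁻¹

lemma mulSupport_conj_comp [Group G] (y x : I → G) (σ : I → I) :
    mulSupport (fun i => y i * x (σ i) * (y i)⁻¹) = σ ⁻¹' mulSupport x := by
  ext i
  simp [conj_eq_one_iff]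

lemma level_eq_zero_of_kle [Preorder G] [One G] {a b : ℤ × (I → G)} (ha : kle kone a)
    (hb : b.1 = 0) (hab : kle a b) : a.1 = 0 ∧ ∀ i, 1 ≤ a.2 i ∧ a.2 i ≤ b.2 i := by
  rcases ha with ha | ⟨ha, h1a⟩ <;> rcases hab with hab | ⟨hab, hle⟩
  · exact absurd ha (by simp [kone]; omega)
  · exact absurd ha (by simp [kone]; omega)
  · exact absurd hab (by simp [kone] at ha; omega)
  · exact ⟨hab.trans hb, fun i => ⟨h1a i, hle i⟩⟩

lemma mulSupport_kmul_subset [MulOneClass G] (φ : Equiv.Perm I) (a b : ℤ × (I → G)) :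
    mulSupport (kmul φ a b).2 ⊆ mulSupport a.2 ∪ (φ ^ a.1) ⁻¹' mulSupport b.2 :=
  (mulSupport_mul _ _).trans (Set.union_subset_union_right _
    (mulSupport_comp_eq_preimage b.2 (φ ^ a.1)).subset)

section Normality

variable [Group G] [PartialOrder G]

lemma kIsIdeal.kIsNormalIdeal {φ : Equiv.Perm I} {n : ℤ} {J : Set (ℤ × (I → G))}
    (hJ : kIsIdeal φ n J) (hJ0 : ∀ p ∈ J, p.1 = 0)
    (hconj : ∀ p ∈ J, ∀ (σ : Equiv.Perm I) (y : I → G),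
      ((0 : ℤ), fun i => y i * p.2 (σ i) * (y i)⁻¹) ∈ J) :
    kIsNormalIdeal φ n J := by
  refine ⟨hJ, fun z _ => Set.ext fun w => ⟨?_, ?_⟩⟩
  · rintro ⟨a, haJ, rfl, hw⟩
    refine ⟨_, hconj a haJ (φ ^ z.1) z.2, Prod.ext ?_ (funext fun i => ?_), hw⟩
    · simp [kmul, hJ0 a haJ]
    · simp [kmul]
  · rintro ⟨b, hbJ, rfl, hw⟩
    refine ⟨_, hconj b hbJ (φ ^ z.1)⁻¹ (fun j => (z.2 ((φ ^ z.1)⁻¹ j))⁻¹),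
      Prod.ext ?_ (funext fun i => ?_), hw⟩
    · simp [kmul, hJ0 b hbJ]
    · simp [kmul, hJ0 b hbJ, mul_assoc]

end Normality

section Ideals

variable [Group G] [PartialOrder G] {φ : Equiv.Perm I} {n : ℤ} {H : Subgroup G}

lemma NI_subset_kE (hn : 0 < n) : NI (I := I) H ⊆ kE n :=
  fun _ hp => ⟨Or.inr ⟨hp.1.symm, fun i => (hp.2 i).2⟩, Or.inl (hp.1 ▸ hn)⟩

lemma kmul_mem_NI [MulLeftMono G] {a b : ℤ × (I → G)} (ha : a ∈ NI H) (hb : b ∈ NI H) :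
    kmul φ a b ∈ NI H :=
  ⟨by simp [kmul, ha.1, hb.1], fun i =>
    ⟨H.mul_mem (ha.2 i).1 (hb.2 _).1, one_le_mul (ha.2 i).2 (hb.2 _).2⟩⟩

lemma mem_NI_of_kle (hH : IsOIdeal H) {a b : ℤ × (I → G)} (ha : kle kone a) (hb : b ∈ NI H)
    (hab : kle a b) : a ∈ NI H := by
  obtain ⟨ha0, hle⟩ := level_eq_zero_of_kle ha hb.1 hab
  exact ⟨ha0, fun i =>
    ⟨hH.mem_of_le_of_le H.one_mem (hb.2 i).1 (hle i).1 (hle i).2, (hle i).1⟩⟩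

lemma kIsIdeal_NI [MulLeftMono G] (hn : 0 < n) (hH : IsOIdeal H) :
    kIsIdeal φ n (NI (I := I) H) :=
  ⟨⟨kone, rfl, fun _ => ⟨H.one_mem, le_rfl⟩⟩, NI_subset_kE hn,
    fun _ ha _ hb _ => kmul_mem_NI ha hb, fun _ ha _ hb hab => mem_NI_of_kle hH ha.1 hb hab⟩

lemma kIsIdeal_NfI [MulLeftMono G] (hn : 0 < n) (hH : IsOIdeal H) :
    kIsIdeal φ n (NfI (I := I) H) := by
  refine ⟨⟨kone, ⟨rfl, fun _ => ⟨H.one_mem, le_rfl⟩⟩, by simp [kone]⟩,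
    fun p hp => NI_subset_kE hn hp.1, fun a ha b hb _ => ⟨kmul_mem_NI ha.1 hb.1, ?_⟩,
    fun a ha b hb hab => ⟨mem_NI_of_kle hH ha.1 hb.1 hab, ?_⟩⟩
  · exact (ha.2.union (hb.2.preimage (φ ^ a.1).injective.injOn)).subset
      (mulSupport_kmul_subset φ a b)
  · obtain ⟨-, hle⟩ := level_eq_zero_of_kle ha.1 hb.1.1 hab
    refine hb.2.subset fun i hai hbi => hai ?_
    exact le_antisymm (hbi ▸ (hle i).2) (hle i).1

lemma conj_mem_NI [MulLeftMono G] [MulRightMono G] (hH : IsOIdeal H) {p : ℤ × (I → G)}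
    (hp : p ∈ NI H) (σ : Equiv.Perm I) (y : I → G) :
    ((0 : ℤ), fun i => y i * p.2 (σ i) * (y i)⁻¹) ∈ NI H :=
  ⟨rfl, fun i => ⟨hH.conj_mem (hp.2 (σ i)).1 (y i), one_le_conj (hp.2 (σ i)).2 (y i)⟩⟩

lemma conj_mem_NfI [MulLeftMono G] [MulRightMono G] (hH : IsOIdeal H) {p : ℤ × (I → G)}
    (hp : p ∈ NfI H) (σ : Equiv.Perm I) (y : I → G) :
    ((0 : ℤ), fun i => y i * p.2 (σ i) * (y i)⁻¹) ∈ NfI H :=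
  ⟨conj_mem_NI hH hp.1 σ y, by
    show (mulSupport _).Finite
    rw [mulSupport_conj_comp]
    exact hp.2.preimage σ.injective.injOn⟩

lemma NfI_ne_singleton_kone [MulLeftMono G] (hH : IsOIdeal H) (hbot : H ≠ ⊥) [Nonempty I] :
    NfI (I := I) H ≠ {kone} := by
  classical
  obtain ⟨h, hhH, hh⟩ := hH.exists_one_lt hbot
  obtain ⟨i₀⟩ := ‹Nonempty I›
  intro hNf
  have hmem : ((0 : ℤ), Pi.mulSingle i₀ h) ∈ NfI (I := I) H := by
    refine ⟨⟨rfl, fun i => ?_⟩,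
      (Set.finite_singleton i₀).subset Pi.mulSupport_mulSingle_subset⟩
    by_cases hi : i = i₀
    · subst hi
      simpa using ⟨hhH, hh.le⟩
    · simp [Pi.mulSingle_eq_of_ne hi, H.one_mem]
  rw [hNf] at hmem
  exact hh.ne' (by simpa [kone] using congrFun (congrArg Prod.snd hmem) i₀)

end Ideals

theorem stmt11_general [Group G] [PartialOrder G]
    [CovariantClass G G (· * ·) (· ≤ ·)] [CovariantClass G G (swap (· * ·)) (· ≤ ·)]
    (φ : Equiv.Perm I) (n : ℤ) (hn : 1 ≤ n)
    (H : Subgroup G) (hH : IsOIdeal H) :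
    kIsNormalIdeal φ n (NI (I := I) H) ∧
    kIsNormalIdeal φ n (NfI (I := I) H) ∧
    (H ≠ ⊥ → Nonempty I → NfI (I := I) H ≠ ({kone} : Set (ℤ × (I → G)))) := by
  have hn' : 0 < n := by omega
  refine ⟨(kIsIdeal_NI hn' hH).kIsNormalIdeal (fun _ hp => hp.1)
      (fun _ hp => conj_mem_NI hH hp),
    (kIsIdeal_NfI hn' hH).kIsNormalIdeal (fun _ hp => hp.1.1)
      (fun _ hp => conj_mem_NfI hH hp),
    fun hbot _ => NfI_ne_singleton_kone hH hbot⟩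

/-- for an o-ideal `H` of a directed po-group `G` and `N = H ∩ G⁺`,
`N^I` is a normal ideal of `E = [0̄, u_n]`; the set `N_f^I` of its finitely
supported elements is a normal ideal too, and it is nontrivial whenever
`H ≠ {e}` and `I` is nonempty. -/
theorem stmt11 [Group G] [PartialOrder G]
    [CovariantClass G G (· * ·) (· ≤ ·)] [CovariantClass G G (swap (· * ·)) (· ≤ ·)]
    (hdir : ∀ a b : G, ∃ c, a ≤ c ∧ b ≤ c)
    (φ : Equiv.Perm I) (n : ℤ) (hn : 1 ≤ n)
    (H : Subgroup G) (hH : IsOIdeal H) :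
    kIsNormalIdeal φ n (NI (I := I) H) ∧
    kIsNormalIdeal φ n (NfI (I := I) H) ∧
    (H ≠ ⊥ → Nonempty I → NfI (I := I) H ≠ ({kone} : Set (ℤ × (I → G)))) :=
  stmt11_general φ n hn H hH
end

section
/- Let H be an o-ideal of a directed po-group G, let N = H ∩ G⁺, n ≥ 1, and let J be a normal ideal of E = [0̄, u_n] with J ⊆ N^I = {(0, ⟨x_i⟩) : x_i ∈ N for all i}. Then for every i ∈ I, the set π_i(J) = {x_i : (0, ⟨x_j : j ∈ I⟩) ∈ J} is the positive cone of an o-ideal of G: there exists an o-ideal K of G with K ∩ G⁺ = π_i(J). -/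
open Function

variable {I G : Type*}

/-- if `J` is a normal ideal of `E = [0̄, u_n]` with `J ⊆ N^I`
(`N = H ∩ G⁺`, `H` an o-ideal of `G`), then for every `i ∈ I` the projection
`π_i(J)` is the positive cone of an o-ideal of `G`. -/
theorem stmt12 [Group G] [PartialOrder G]
    [CovariantClass G G (· * ·) (· ≤ ·)] [CovariantClass G G (swap (· * ·)) (· ≤ ·)]
    (hdir : ∀ a b : G, ∃ c, a ≤ c ∧ b ≤ c)
    (φ : Equiv.Perm I) (n : ℤ) (hn : 1 ≤ n)
    (H : Subgroup G) (hH : IsOIdeal H)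
    (J : Set (ℤ × (I → G))) (hJ : kIsNormalIdeal φ n J) (hJN : J ⊆ NI H)
    (i : I) :
    ∃ K : Subgroup G, IsOIdeal K ∧
      (K : Set G) ∩ {g : G | 1 ≤ g} = {x : G | ∃ p ∈ J, p.2 i = x} := by
  classical
  obtain ⟨⟨⟨a0, ha0⟩, hJE, hmulJ, hdownJ⟩, hnorm⟩ := hJ
  have hposn : (0:ℤ) < n := lt_of_lt_of_le one_pos hn
  have hmem : ∀ p ∈ J, p.1 = 0 ∧ ∀ j, 1 ≤ p.2 j := fun p hp =>
    ⟨(hJN hp).1, fun j => ((hJN hp).2 j).2⟩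
  set P : Set G := {x : G | ∃ p ∈ J, p.2 i = x} with hPdef
  have Ppos : ∀ x ∈ P, (1:G) ≤ x := by
    rintro x ⟨p, hp, rfl⟩; exact (hmem p hp).2 i
  have hkoneJ : (kone : ℤ × (I → G)) ∈ J := by
    have hE : (kone : ℤ × (I → G)) ∈ kE (G := G) (I := I) n :=
      ⟨Or.inr ⟨rfl, fun j => le_refl 1⟩, Or.inl hposn⟩
    exact hdownJ kone hE a0 ha0 (Or.inr ⟨(hmem a0 ha0).1.symm, fun j => (hmem a0 ha0).2 j⟩)
  have Pone : (1:G) ∈ P := ⟨kone, hkoneJ, rfl⟩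
  have Pmul : ∀ x ∈ P, ∀ y ∈ P, x * y ∈ P := by
    rintro x ⟨p, hp, rfl⟩ y ⟨q, hq, rfl⟩
    obtain ⟨hp1, _⟩ := hmem p hp
    have hle : kle (kmul φ p q) (kunit (G := G) (I := I) n) :=
      Or.inl (by simp [kmul, kunit, hp1, (hmem q hq).1, hposn])
    exact ⟨kmul φ p q, hmulJ p hp q hq hle, by simp [kmul, hp1]⟩
  have Pdown : ∀ x ∈ P, ∀ g : G, 1 ≤ g → g ≤ x → g ∈ P := by
    rintro x ⟨p, hp, rfl⟩ g hg1 hgp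
    obtain ⟨hp1, hp2⟩ := hmem p hp
    set a : ℤ × (I → G) := (0, fun j => if j = i then g else p.2 j) with ha
    have haE : a ∈ kE (G := G) (I := I) n := by
      constructor
      · refine Or.inr ⟨rfl, fun j => ?_⟩
        by_cases h : j = i <;> simp [ha, h, kone, hg1, hp2 j]
      · exact Or.inl hposn
    have hlep : kle a p := by
      refine Or.inr ⟨hp1.symm, fun j => ?_⟩
      by_cases h : j = i
      · subst h; simpa [ha] using hgp
      · simp [ha, h]
    exact ⟨a, hdownJ a haE p hp hlep, by simp [ha]⟩
  have Pconj₁ : ∀ c : G, 1 ≤ c → ∀ x ∈ P, c * x * c⁻¹ ∈ P := by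
    rintro c hc x ⟨p, hp, rfl⟩
    obtain ⟨hp1, _⟩ := hmem p hp
    set z : ℤ × (I → G) := (0, fun _ => c) with hz
    have hzE : z ∈ kE (G := G) (I := I) n := ⟨Or.inr ⟨rfl, fun _ => hc⟩, Or.inl hposn⟩
    have hw : kmul φ z p ∈ {w | ∃ a ∈ J, kmul φ z a = w ∧ kle w (kunit (G := G) (I := I) n)} :=
      ⟨p, hp, rfl, Or.inl (by simp [kmul, kunit, hz, hp1, hposn])⟩
    rw [hnorm z hzE] at hw
    obtain ⟨b, hb, heq, -⟩ := hw
    have h2 := congrFun (congrArg Prod.snd heq) i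
    simp [kmul, hz] at h2
    -- h2 : b.2 i * c = c * p.2 i   (hopefully)
    exact ⟨b, hb, eq_mul_inv_iff_mul_eq.mpr h2⟩
  have Pconj₂ : ∀ c : G, 1 ≤ c → ∀ x ∈ P, c⁻¹ * x * c ∈ P := by
    rintro c hc x ⟨q, hq, rfl⟩
    obtain ⟨hq1, _⟩ := hmem q hq
    set z : ℤ × (I → G) := (0, fun _ => c) with hz
    have hzE : z ∈ kE (G := G) (I := I) n := ⟨Or.inr ⟨rfl, fun _ => hc⟩, Or.inl hposn⟩
    have hw : kmul φ q z ∈ {w | ∃ b ∈ J, kmul φ b z = w ∧ kle w (kunit (G := G) (I := I) n)} :=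
      ⟨q, hq, rfl, Or.inl (by simp [kmul, kunit, hz, hq1, hposn])⟩
    rw [← hnorm z hzE] at hw
    obtain ⟨a, ha', heq, -⟩ := hw
    have h2 := congrFun (congrArg Prod.snd heq) i
    simp [kmul, hz] at h2
    -- h2 : c * a.2 i = q.2 i * c
    refine ⟨a, ha', ?_⟩
    rw [mul_assoc]
    exact eq_inv_mul_iff_mul_eq.mpr h2
  -- the subgroup K
  set Kc : Set G := {g : G | ∃ p ∈ P, p⁻¹ ≤ g ∧ g ≤ p} with hKc
  have PsubK : ∀ x ∈ P, x ∈ Kc := fun x hx =>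
    ⟨x, hx, le_trans (inv_le_one'.mpr (Ppos x hx)) (Ppos x hx), le_refl x⟩
  have Kone : (1:G) ∈ Kc := PsubK 1 Pone
  have Kinv : ∀ g ∈ Kc, g⁻¹ ∈ Kc := by
    rintro g ⟨p, hp, h1, h2⟩
    exact ⟨p, hp, inv_le_inv_iff.mpr h2, by simpa using inv_le_inv_iff.mpr h1⟩
  have Kmul : ∀ g ∈ Kc, ∀ h ∈ Kc, g * h ∈ Kc := by
    rintro g ⟨p, hp, hp1, hp2⟩ h ⟨q, hq, hq1, hq2⟩
    refine ⟨p * q * (q * p), Pmul _ (Pmul _ hp _ hq) _ (Pmul _ hq _ hp), ?_, ?_⟩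
    · have h1 : q * p ≤ p * q * (q * p) := le_mul_of_one_le_left' (one_le_mul (Ppos p hp) (Ppos q hq))
      calc (p * q * (q * p))⁻¹ ≤ (q * p)⁻¹ := inv_le_inv_iff.mpr h1
        _ = p⁻¹ * q⁻¹ := by group
        _ ≤ g * h := mul_le_mul' hp1 hq1
    · calc g * h ≤ p * q := mul_le_mul' hp2 hq2
        _ ≤ p * q * (q * p) := le_mul_of_one_le_right' (one_le_mul (Ppos q hq) (Ppos p hp))
  refine ⟨{ carrier := Kc, one_mem' := Kone, inv_mem' := fun {g} hg => Kinv g hg,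
            mul_mem' := fun {g h} hg hh => Kmul g hg h hh }, ⟨?_, ?_, ?_⟩, ?_⟩
  · -- normality
    rintro g ⟨p, hp, hp1, hp2⟩ x
    obtain ⟨c, hxc, h1c⟩ := hdir x 1
    have hd : (1:G) ≤ x⁻¹ * c := by
      calc (1:G) = x⁻¹ * x := (inv_mul_cancel x).symm
        _ ≤ x⁻¹ * c := mul_le_mul_right hxc x⁻¹
    set d : G := x⁻¹ * c with hdd
    have hxcd : x = c * d⁻¹ := by rw [hdd]; group
    have hq : c * (d⁻¹ * p * d) * c⁻¹ ∈ P := Pconj₁ c h1c _ (Pconj₂ d hd p hp)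
    have hqeq : c * (d⁻¹ * p * d) * c⁻¹ = x * p * x⁻¹ := by rw [hxcd]; group
    rw [hqeq] at hq
    refine ⟨x * p * x⁻¹, hq, ?_, ?_⟩
    · have : (x * p * x⁻¹)⁻¹ = x * p⁻¹ * x⁻¹ := by group
      rw [this]
      exact mul_le_mul_left (mul_le_mul_right hp1 x) x⁻¹
    · exact mul_le_mul_left (mul_le_mul_right hp2 x) x⁻¹
  · -- convexity
    rintro a ⟨p, hp, hp1, hp2⟩ b ⟨q, hq, hq1, hq2⟩ g hag hgb
    refine ⟨p * q, Pmul _ hp _ hq, ?_, ?_⟩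
    · calc (p * q)⁻¹ ≤ p⁻¹ := inv_le_inv_iff.mpr (le_mul_of_one_le_right' (Ppos q hq))
        _ ≤ a := hp1
        _ ≤ g := hag
    · calc g ≤ b := hgb
        _ ≤ q := hq2
        _ ≤ p * q := le_mul_of_one_le_left' (Ppos p hp)
  · -- directedness
    rintro a ⟨p, hp, hp1, hp2⟩ b ⟨q, hq, hq1, hq2⟩
    refine ⟨p * q, PsubK _ (Pmul _ hp _ hq), ?_, ?_⟩
    · exact le_trans hp2 (le_mul_of_one_le_right' (Ppos q hq))
    · exact le_trans hq2 (le_mul_of_one_le_left' (Ppos p hp))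
  · -- K ∩ G⁺ = P
    ext g
    constructor
    · rintro ⟨⟨p, hp, hp1, hp2⟩, hg1⟩
      exact Pdown _ hp g hg1 hp2
    · intro hg
      exact ⟨PsubK g hg, Ppos g hg⟩
end

section
/- Let G be a nontrivial (G ≠ {e}) directed po-group satisfying RDP₁, I a nonempty set, φ : I → I a bijection, and n ≥ 1. Then the following are equivalent: (1) G possesses a least nontrivial o-ideal and for all i, j ∈ I there exists m ∈ ℤ with φ^m(i) = j; (2) E = [0̄, u_n] possesses a least nontrivial normal ideal. -/
/-!
Since `u_n` has level `n ≥ 1`, a normal ideal of `E` with an element of positive level contains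
every positive element of level `0`; so a least nontrivial normal ideal is `{0} × C` for a
*normal cone* `C` of positive functions `I → G`: a down-closed submonoid stable under pointwise
conjugation and under reindexing by `φ` (normality against the elements of levels `0` and `1`).
Cones and o-ideals correspond: an o-ideal `H` and an orbit of `φ` give the cone of finitely
supported positive functions with values in `H` and support in that orbit, and a cone `C` gives
the convex subgroup generated by the `g ≥ 1` all of whose point masses lie in `C`. Leastness
transfers along this correspondence; and since a least ideal lies in the cone of every orbit,
while the cones of distinct orbits meet only in `1`, `φ` has a single orbit.
-/

open Function

variable {I G : Type*}

def HasLeastNormalIdeal [Group G] [PartialOrder G] (φ : Equiv.Perm I) (n : ℤ) : Prop :=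
  ∃ J : Set (ℤ × (I → G)), kIsNormalIdeal φ n J ∧ J ≠ {kone} ∧
    ∀ J' : Set (ℤ × (I → G)), kIsNormalIdeal φ n J' → J' ≠ {kone} → J ⊆ J'

def HasLeastOIdeal (G : Type*) [Group G] [PartialOrder G] : Prop :=
  ∃ H : Subgroup G, IsOIdeal H ∧ H ≠ ⊥ ∧
    ∀ H' : Subgroup G, IsOIdeal H' → H' ≠ ⊥ → H ≤ H'

/-- The RDP₁ property for `(le, mul, one)`. -/
def RDP1rel {α : Type*} (le : α → α → Prop) (mul : α → α → α) (one : α) : Prop :=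
  ∀ a1 a2 b1 b2 : α, le one a1 → le one a2 → le one b1 → le one b2 →
    mul a1 a2 = mul b1 b2 →
    ∃ c11 c12 c21 c22 : α,
      le one c11 ∧ le one c12 ∧ le one c21 ∧ le one c22 ∧
      a1 = mul c11 c12 ∧ a2 = mul c21 c22 ∧ b1 = mul c11 c21 ∧ b2 = mul c12 c22 ∧
      (∀ x y : α, le one x → le x c12 → le one y → le y c21 → mul x y = mul y x)

lemma IsOIdeal.exists_one_lt_s14 [Group G] [PartialOrder G] [CovariantClass G G (· * ·) (· ≤ ·)]
    {H : Subgroup G} (hH : IsOIdeal H) (hne : H ≠ ⊥) :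
    ∃ s ∈ H, 1 < s := by
  obtain ⟨h, hh, hh1⟩ := H.bot_or_exists_ne_one.resolve_left hne
  obtain ⟨c, hc, hhc, h1c⟩ := hH.2.2 h hh 1 H.one_mem
  by_cases hc1 : c = 1
  · subst hc1
    exact ⟨h⁻¹, H.inv_mem hh, (one_le_inv'.2 hhc).lt_of_ne (by simpa [eq_comm] using hh1)⟩
  · exact ⟨c, hc, h1c.lt_of_ne (Ne.symm hc1)⟩

lemma isOIdeal_top [Group G] [PartialOrder G] (hdir : ∀ a b : G, ∃ c, a ≤ c ∧ b ≤ c) :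
    IsOIdeal (⊤ : Subgroup G) :=
  ⟨fun _ _ _ => trivial, fun _ _ _ _ _ _ _ => trivial,
    fun a _ b _ => (hdir a b).imp fun _ hc => ⟨trivial, hc⟩⟩

section ConvexSubgroup

variable [Group G] [PartialOrder G]
  [CovariantClass G G (· * ·) (· ≤ ·)] [CovariantClass G G (swap (· * ·)) (· ≤ ·)]

lemma conj_le_conj {a b : G} (x : G) (h : a ≤ b) : x * a * x⁻¹ ≤ x * b * x⁻¹ :=
  mul_le_mul_left (mul_le_mul_right h x) x⁻¹

lemma one_le_conj_s14 {a : G} (x : G) (h : 1 ≤ a) : 1 ≤ x * a * x⁻¹ := by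
  simpa using conj_le_conj x h

namespace Submonoid

def convexSubgroup (N : Submonoid G) : Subgroup G where
  carrier := {g | ∃ m ∈ N, 1 ≤ m ∧ m⁻¹ ≤ g ∧ g ≤ m}
  one_mem' := ⟨1, N.one_mem, le_rfl, by simp⟩
  mul_mem' := by
    rintro a b ⟨m, hm, hm1, hma, ham⟩ ⟨m', hm', hm'1, hm'b, hbm'⟩
    refine ⟨m * m' * m, N.mul_mem (N.mul_mem hm hm') hm,
      one_le_mul (one_le_mul hm1 hm'1) hm1, ?_, ?_⟩
    · calc (m * m' * m)⁻¹ = m⁻¹ * m'⁻¹ * m⁻¹ := by group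
        _ ≤ m⁻¹ * m'⁻¹ := mul_le_of_le_one_right' (inv_le_one'.2 hm1)
        _ ≤ a * b := mul_le_mul' hma hm'b
    · calc a * b ≤ m * m' := mul_le_mul' ham hbm'
        _ ≤ m * m' * m := le_mul_of_one_le_right' hm1
  inv_mem' := by
    rintro a ⟨m, hm, hm1, hma, ham⟩
    exact ⟨m, hm, hm1, inv_le_inv_iff.2 ham, by simpa using inv_le_inv_iff.2 hma⟩

variable {N : Submonoid G}

lemma mem_convexSubgroup_of_mem {m : G} (hm : m ∈ N) (hm1 : 1 ≤ m) : m ∈ N.convexSubgroup :=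
  ⟨m, hm, hm1, (inv_le_one'.2 hm1).trans hm1, le_rfl⟩

lemma isOIdeal_convexSubgroup (hN : ∀ m ∈ N, ∀ x : G, x * m * x⁻¹ ∈ N) :
    IsOIdeal N.convexSubgroup := by
  refine ⟨?_, ?_, ?_⟩
  · rintro g ⟨m, hm, hm1, hmg, hgm⟩ x
    refine ⟨x * m * x⁻¹, hN m hm x, one_le_conj_s14 x hm1, ?_, conj_le_conj x hgm⟩
    simpa [mul_assoc] using conj_le_conj x hmg
  · rintro a ⟨ma, hma, hma1, hmaa, -⟩ b ⟨mb, hmb, hmb1, -, hbmb⟩ g hag hgb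
    refine ⟨ma * mb, N.mul_mem hma hmb, one_le_mul hma1 hmb1, ?_, ?_⟩
    · calc (ma * mb)⁻¹ = mb⁻¹ * ma⁻¹ := mul_inv_rev _ _
        _ ≤ ma⁻¹ := mul_le_of_le_one_left' (inv_le_one'.2 hmb1)
        _ ≤ g := hmaa.trans hag
    · calc g ≤ mb := hgb.trans hbmb
        _ ≤ ma * mb := le_mul_of_one_le_left' hma1
  · rintro a ⟨ma, hma, hma1, -, hama⟩ b ⟨mb, hmb, hmb1, -, hbmb⟩
    exact ⟨ma * mb, mem_convexSubgroup_of_mem (N.mul_mem hma hmb) (one_le_mul hma1 hmb1),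
      hama.trans (le_mul_of_one_le_right' hmb1), hbmb.trans (le_mul_of_one_le_left' hma1)⟩

lemma convexSubgroup_le {H : Subgroup G} (hH : IsOIdeal H) (hNH : N ≤ H.toSubmonoid) :
    N.convexSubgroup ≤ H := fun g ⟨_, hm, _, hmg, hgm⟩ =>
  hH.2.1 _ (H.inv_mem (hNH hm)) _ (hNH hm) g hmg hgm

end Submonoid

end ConvexSubgroup

section Lex

variable [Group G] {φ : Equiv.Perm I}

lemma kmul_mk (k l : ℤ) (c f : I → G) :
    kmul φ (k, c) (l, f) = (k + l, c * f ∘ (φ ^ k)) := rfl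

lemma kmul_mk_zero_eq_iff {k : ℤ} {c f g : I → G} :
    kmul φ (k, c) (0, f) = kmul φ (0, g) (k, c) ↔ c * f ∘ (φ ^ k) = g * c := by
  simp [kmul_mk]

lemma kmul_left_cancel {z a b : ℤ × (I → G)} (h : kmul φ z a = kmul φ z b) : a = b := by
  obtain ⟨h1, h2⟩ := Prod.mk.inj h
  exact Prod.ext (add_left_cancel h1)
    ((φ ^ z.1).surjective.injective_comp_right (funext fun i => mul_left_cancel (congrFun h2 i)))

lemma kmul_right_cancel {z a b : ℤ × (I → G)} (h : kmul φ a z = kmul φ b z) : a = b := by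
  obtain ⟨h1, h2⟩ := Prod.mk.inj h
  have hab : a.1 = b.1 := add_right_cancel h1
  refine Prod.ext hab (funext fun i => mul_right_cancel (b := z.2 ((φ ^ a.1) i)) ?_)
  simpa [hab] using congrFun h2 i

lemma image_ne_singleton_kone {C : Set (I → G)} {f : I → G} (hf : f ∈ C) (hf1 : f ≠ 1) :
    Prod.mk (0 : ℤ) '' C ≠ {kone} := fun h => by
  have hf0 : ((0 : ℤ), f) ∈ ({kone} : Set (ℤ × (I → G))) := h ▸ Set.mem_image_of_mem _ hf
  exact hf1 (congrArg Prod.snd hf0)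

variable [PartialOrder G] {n : ℤ}

lemma mk_zero_mem_kE (hn : 1 ≤ n) {f : I → G} (hf : 1 ≤ f) : ((0 : ℤ), f) ∈ kE n :=
  ⟨Or.inr ⟨rfl, hf⟩, Or.inl (show (0 : ℤ) < n by omega)⟩

lemma kle_one_kunit (hn : 1 ≤ n) {c : I → G} (hc : c ≤ 1) : kle ((1 : ℤ), c) (kunit n) :=
  hn.lt_or_eq.imp id fun h => ⟨h, hc⟩

lemma mk_one_mem_kE (hn : 1 ≤ n) {c : I → G} (hc : c ≤ 1) : ((1 : ℤ), c) ∈ kE n :=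
  ⟨Or.inl one_pos, kle_one_kunit hn hc⟩

lemma one_le_of_mk_zero_mem_kE {f : I → G} (hf : ((0 : ℤ), f) ∈ kE n) : 1 ≤ f :=
  (hf.1.resolve_left (lt_irrefl 0)).2

lemma kle_kmul_mk_zero_zero_kunit (hn : 1 ≤ n) (c f : I → G) :
    kle (kmul φ ((0 : ℤ), c) (0, f)) (kunit n) :=
  Or.inl (show (0 : ℤ) + 0 < n by omega)

lemma kIsIdeal.kone_mem {J : Set (ℤ × (I → G))} (hJ : kIsIdeal φ n J) (hn : 1 ≤ n) :
    kone ∈ J := by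
  obtain ⟨p, hp⟩ := hJ.1
  exact hJ.2.2.2 kone (mk_zero_mem_kE hn le_rfl) p hp (hJ.2.1 hp).1

lemma kIsIdeal.exists_ne_one {J : Set (ℤ × (I → G))} (hJ : kIsIdeal φ n J) (hn : 1 ≤ n)
    (hJne : J ≠ {kone}) (h0 : ∀ p ∈ J, p.1 = 0) : ∃ f : I → G, ((0 : ℤ), f) ∈ J ∧ f ≠ 1 := by
  obtain ⟨⟨k, f⟩, hp, hpk⟩ :=
    ((Set.nontrivial_iff_ne_singleton (hJ.kone_mem hn)).2 hJne).exists_ne kone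
  obtain rfl : k = 0 := h0 _ hp
  exact ⟨f, hp, fun hf => hpk (by rw [hf]; rfl)⟩

lemma kIsIdeal.image_subset_of_fst_ne_zero {J : Set (ℤ × (I → G))} (hJ : kIsIdeal φ n J)
    (hn : 1 ≤ n) {p : ℤ × (I → G)} (hp : p ∈ J) (hp0 : p.1 ≠ 0) {C : Set (I → G)}
    (hC : ∀ f ∈ C, 1 ≤ f) : Prod.mk 0 '' C ⊆ J := by
  rintro _ ⟨f, hf, rfl⟩
  have hp_pos : 0 < p.1 := (hJ.2.1 hp).1.resolve_right fun h => hp0 h.1.symm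
  exact hJ.2.2.2 _ (mk_zero_mem_kE hn (hC f hf)) p hp (Or.inl hp_pos)

structure IsNormalCone (φ : Equiv.Perm I) (C : Set (I → G)) : Prop where
  one_mem : 1 ∈ C
  one_le {f} : f ∈ C → 1 ≤ f
  mul_mem {f g} : f ∈ C → g ∈ C → f * g ∈ C
  mem_of_le {f g} : f ∈ C → 1 ≤ g → g ≤ f → g ∈ C
  comp_mem {f} : f ∈ C → f ∘ φ ∈ C
  comp_symm_mem {f} : f ∈ C → f ∘ φ.symm ∈ C
  conj_mem {f} : f ∈ C → ∀ c : I → G, c * f * c⁻¹ ∈ C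

namespace IsNormalCone

variable {C : Set (I → G)}

lemma comp_zpow_mem (hC : IsNormalCone φ C) {f : I → G} (hf : f ∈ C) (k : ℤ) :
    f ∘ (φ ^ k) ∈ C := by
  induction k using Int.induction_on with
  | zero => simpa using hf
  | succ k ih => simpa [zpow_add_one, comp_assoc] using hC.comp_mem ih
  | pred k ih => simpa [zpow_sub_one, comp_assoc, Equiv.Perm.inv_def] using hC.comp_symm_mem ih

lemma kIsIdeal_image (hC : IsNormalCone φ C) (hn : 1 ≤ n) : kIsIdeal φ n (Prod.mk 0 '' C) := by
  refine ⟨⟨_, 1, hC.one_mem, rfl⟩, ?_, ?_, ?_⟩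
  · rintro _ ⟨f, hf, rfl⟩
    exact mk_zero_mem_kE hn (hC.one_le hf)
  · rintro _ ⟨f, hf, rfl⟩ _ ⟨g, hg, rfl⟩ -
    exact ⟨f * g, hC.mul_mem hf hg, by simp [kmul_mk]⟩
  · rintro ⟨k, g⟩ ⟨hg0, -⟩ _ ⟨f, hf, rfl⟩ (hk | ⟨rfl, hgf⟩)
    · exact absurd hk (not_lt.2 (hg0.elim le_of_lt fun h => h.1.le))
    · exact ⟨g, hC.mem_of_le hf (hg0.resolve_left (lt_irrefl _)).2 hgf, rfl⟩

lemma kIsNormalIdeal_image (hC : IsNormalCone φ C) (hn : 1 ≤ n) :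
    kIsNormalIdeal φ n (Prod.mk 0 '' C) := by
  refine ⟨hC.kIsIdeal_image hn, ?_⟩
  rintro ⟨k, c⟩ -
  ext w
  constructor
  · rintro ⟨_, ⟨f, hf, rfl⟩, rfl, hw⟩
    refine ⟨_, ⟨_, hC.conj_mem (hC.comp_zpow_mem hf k) c, rfl⟩, ?_, hw⟩
    exact (kmul_mk_zero_eq_iff.2 (by group)).symm
  · rintro ⟨_, ⟨g, hg, rfl⟩, rfl, hw⟩
    refine ⟨_, ⟨_, hC.comp_zpow_mem (hC.conj_mem hg c⁻¹) (-k), rfl⟩, ?_, hw⟩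
    exact kmul_mk_zero_eq_iff.2 (by ext i; simp [zpow_neg, ← mul_assoc])

end IsNormalCone

end Lex

namespace kIsNormalIdeal

variable [Group G] [PartialOrder G] {φ : Equiv.Perm I} {n : ℤ} {J : Set (ℤ × (I → G))}

lemma conj_comp_zpow_mem (hJ : kIsNormalIdeal φ n J) {k : ℤ} {c f : I → G}
    (hz : (k, c) ∈ kE n) (hf : ((0 : ℤ), f) ∈ J)
    (hle : kle (kmul φ (k, c) (0, f)) (kunit n)) :
    ((0 : ℤ), c * f ∘ (φ ^ k) * c⁻¹) ∈ J := by
  have hw : kmul φ (k, c) (0, f) ∈ {w | ∃ a ∈ J, kmul φ (k, c) a = w ∧ kle w (kunit n)} :=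
    ⟨_, hf, rfl, hle⟩
  rw [hJ.2 _ hz] at hw
  obtain ⟨b, hb, hbz, -⟩ := hw
  rwa [kmul_right_cancel
    (hbz.trans (kmul_mk_zero_eq_iff (g := c * f ∘ (φ ^ k) * c⁻¹).2 (by group)))] at hb

lemma inv_conj_comp_zpow_neg_mem (hJ : kIsNormalIdeal φ n J) {k : ℤ} {c g : I → G}
    (hz : (k, c) ∈ kE n) (hg : ((0 : ℤ), g) ∈ J)
    (hle : kle (kmul φ (0, g) (k, c)) (kunit n)) :
    ((0 : ℤ), (c⁻¹ * g * c) ∘ (φ ^ (-k))) ∈ J := by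
  have hw : kmul φ (0, g) (k, c) ∈ {w | ∃ b ∈ J, kmul φ b (k, c) = w ∧ kle w (kunit n)} :=
    ⟨_, hg, rfl, hle⟩
  rw [← hJ.2 _ hz] at hw
  obtain ⟨a, ha, haz, -⟩ := hw
  rwa [kmul_left_cancel (haz.trans (kmul_mk_zero_eq_iff (f := (c⁻¹ * g * c) ∘ (φ ^ (-k))).2
    (by ext i; simp [zpow_neg, ← mul_assoc])).symm)] at ha

lemma conj_mem_of_one_le (hJ : kIsNormalIdeal φ n J) (hn : 1 ≤ n) {c f : I → G} (hc : 1 ≤ c)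
    (hf : ((0 : ℤ), f) ∈ J) : ((0 : ℤ), c * f * c⁻¹) ∈ J := by
  simpa using hJ.conj_comp_zpow_mem (mk_zero_mem_kE hn hc) hf (kle_kmul_mk_zero_zero_kunit hn _ _)

lemma inv_conj_mem_of_one_le (hJ : kIsNormalIdeal φ n J) (hn : 1 ≤ n) {c f : I → G}
    (hc : 1 ≤ c) (hf : ((0 : ℤ), f) ∈ J) : ((0 : ℤ), c⁻¹ * f * c) ∈ J := by
  simpa using hJ.inv_conj_comp_zpow_neg_mem (mk_zero_mem_kE hn hc) hf
    (kle_kmul_mk_zero_zero_kunit hn _ _)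

lemma isNormalCone_preimage [CovariantClass G G (· * ·) (· ≤ ·)] (hJ : kIsNormalIdeal φ n J)
    (hn : 1 ≤ n) (hdir : ∀ a b : G, ∃ c, a ≤ c ∧ b ≤ c) : IsNormalCone φ (Prod.mk 0 ⁻¹' J) where
  one_mem := hJ.1.kone_mem hn
  one_le hf := one_le_of_mk_zero_mem_kE (hJ.1.2.1 hf)
  mul_mem hf hg := by
    simpa [kmul_mk] using hJ.1.2.2.1 _ hf _ hg (kle_kmul_mk_zero_zero_kunit hn _ _)
  mem_of_le hf hg1 hgf := hJ.1.2.2.2 _ (mk_zero_mem_kE hn hg1) _ hf (Or.inr ⟨rfl, hgf⟩)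
  comp_mem {f} hf := by
    -- `(1, (f ∘ φ)⁻¹)` lies below `u_n` even for `n = 1`, and `(1, (f ∘ φ)⁻¹) * (0, f) = (1, 1)`.
    have hf1 := one_le_of_mk_zero_mem_kE (hJ.1.2.1 hf)
    simpa using hJ.conj_comp_zpow_mem (k := 1) (c := (f ∘ φ)⁻¹)
      (mk_one_mem_kE hn fun i => inv_le_one'.2 (hf1 (φ i))) hf
      (kle_one_kunit hn (le_of_eq (by ext i; simp)))
  comp_symm_mem {f} hf := by
    have hf1 := one_le_of_mk_zero_mem_kE (hJ.1.2.1 hf)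
    simpa [Equiv.Perm.inv_def] using hJ.inv_conj_comp_zpow_neg_mem (k := 1) (c := f⁻¹)
      (mk_one_mem_kE hn fun i => inv_le_one'.2 (hf1 i)) hf
      (kle_one_kunit hn (le_of_eq (by ext i; simp)))
  conj_mem {f} hf c := by
    -- By directedness `c = d * (c⁻¹ * d)⁻¹` with `d` and `c⁻¹ * d` positive.
    choose d hcd hd1 using fun i => hdir (c i) 1
    have he : 1 ≤ c⁻¹ * d := fun i => by simpa using mul_le_mul_right (hcd i) (c i)⁻¹
    have := hJ.conj_mem_of_one_le hn hd1 (hJ.inv_conj_mem_of_one_le hn he hf)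
    show ((0 : ℤ), c * f * c⁻¹) ∈ J
    convert this using 2
    group

end kIsNormalIdeal

namespace IsNormalCone

variable [Group G] [PartialOrder G] [DecidableEq I] {φ : Equiv.Perm I} {C : Set (I → G)}

def mulSingleSubmonoid (hC : IsNormalCone φ C) : Submonoid G where
  carrier := {g | ∀ j, Pi.mulSingle j g ∈ C}
  one_mem' j := by simpa using hC.one_mem
  mul_mem' ha hb j := by simpa [Pi.mulSingle_mul] using hC.mul_mem (ha j) (hb j)

lemma conj_mem_mulSingleSubmonoid (hC : IsNormalCone φ C) {m : G}
    (hm : m ∈ hC.mulSingleSubmonoid) (x : G) : x * m * x⁻¹ ∈ hC.mulSingleSubmonoid := fun j => by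
  convert hC.conj_mem (hm j) (fun _ => x) using 1
  exact Pi.mulSingle_op (fun _ y => x * y * x⁻¹) (fun _ => by group) j m

lemma mulSingle_mem_of_sameCycle (hC : IsNormalCone φ C) {f : I → G} (hf : f ∈ C) {i j : I}
    (hji : φ.SameCycle j i) : Pi.mulSingle j (f i) ∈ C := by
  obtain ⟨k, hk⟩ := hji
  have hi : Pi.mulSingle i (f i) ∈ C := by
    refine hC.mem_of_le hf (Pi.one_le_mulSingle.2 (hC.one_le hf i)) fun l => ?_
    by_cases hl : l = i
    · subst hl; simp
    · simpa [hl] using hC.one_le hf l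
  have hj : (φ ^ k).symm i = j := (φ ^ k).symm_apply_eq.2 hk.symm
  simpa [Pi.mulSingle_comp_equiv, hj] using hC.comp_zpow_mem hi k

variable [CovariantClass G G (· * ·) (· ≤ ·)] [CovariantClass G G (swap (· * ·)) (· ≤ ·)]

lemma mulSingle_mem_of_mem_convexSubgroup (hC : IsNormalCone φ C) {g : G}
    (hg : g ∈ hC.mulSingleSubmonoid.convexSubgroup) (hg1 : 1 ≤ g) (i : I) :
    Pi.mulSingle i g ∈ C := by
  obtain ⟨m, hm, -, -, hgm⟩ := hg
  exact hC.mem_of_le (hm i) (Pi.one_le_mulSingle.2 hg1) (Pi.mulSingle_le_mulSingle.2 hgm)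

lemma convexSubgroup_ne_bot (hC : IsNormalCone φ C) (htrans : ∀ i j : I, φ.SameCycle i j)
    {f : I → G} (hf : f ∈ C) (hf1 : f ≠ 1) : hC.mulSingleSubmonoid.convexSubgroup ≠ ⊥ := by
  obtain ⟨i, hi⟩ := Function.ne_iff.1 hf1
  have hfi : f i ∈ hC.mulSingleSubmonoid := fun j => hC.mulSingle_mem_of_sameCycle hf (htrans j i)
  intro hbot
  have := Submonoid.mem_convexSubgroup_of_mem hfi (hC.one_le hf i)
  rw [hbot, Subgroup.mem_bot] at this
  exact hi this

lemma mem_of_forall_mulSingle_mem (hC : IsNormalCone φ C) {f : I → G} (hf1 : 1 ≤ f)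
    (hfin : (mulSupport f).Finite) (hf : ∀ i, Pi.mulSingle i (f i) ∈ C) : f ∈ C := by
  obtain ⟨F, hF, hfF⟩ : ∃ F ∈ C, ∀ i ∈ hfin.toFinset, f i ≤ F i := by
    induction hfin.toFinset using Finset.induction_on with
    | empty => exact ⟨1, hC.one_mem, by simp⟩
    | insert a s _ ih =>
      obtain ⟨F, hF, hfF⟩ := ih
      refine ⟨Pi.mulSingle a (f a) * F, hC.mul_mem (hf a) hF, ?_⟩
      simp only [Finset.mem_insert, forall_eq_or_imp]
      have ha : 1 ≤ Pi.mulSingle a (f a) := (Pi.one_le_mulSingle (α := fun _ => G)).2 (hf1 a)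
      refine ⟨by simpa using hC.one_le hF a, fun i hi => ?_⟩
      exact (hfF i hi).trans (le_mul_of_one_le_left' (ha i))
  refine hC.mem_of_le hF hf1 fun i => ?_
  by_cases hi : f i = 1
  · exact hi ▸ hC.one_le hF i
  · exact hfF i (hfin.mem_toFinset.2 hi)

end IsNormalCone

section OrbitCone

variable [Group G] [PartialOrder G] {φ : Equiv.Perm I}

def orbitCone (φ : Equiv.Perm I) (H : Subgroup G) (i₀ : I) : Set (I → G) :=
  {f | 1 ≤ f ∧ (∀ i, f i ∈ H) ∧ (mulSupport f).Finite ∧ mulSupport f ⊆ {i | φ.SameCycle i₀ i}}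

lemma mulSingle_mem_orbitCone [DecidableEq I] {H : Subgroup G} {s : G} (hs : s ∈ H)
    (hs1 : 1 ≤ s) (i₀ : I) : Pi.mulSingle i₀ s ∈ orbitCone φ H i₀ := by
  refine ⟨Pi.one_le_mulSingle.2 hs1, fun i => ?_, (Set.finite_singleton i₀).subset
    Pi.mulSupport_mulSingle_subset, fun i hi => ?_⟩
  · by_cases hi : i = i₀ <;> simp [hi, hs, H.one_mem]
  · obtain rfl : i = i₀ := Pi.mulSupport_mulSingle_subset hi
    exact Equiv.Perm.SameCycle.refl _ _

lemma image_orbitCone_ne_singleton [CovariantClass G G (· * ·) (· ≤ ·)] {H : Subgroup G}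
    (hH : IsOIdeal H) (hne : H ≠ ⊥) (i₀ : I) :
    Prod.mk (0 : ℤ) '' orbitCone φ H i₀ ≠ {kone} := by
  classical
  obtain ⟨s, hs, hs1⟩ := hH.exists_one_lt_s14 hne
  exact image_ne_singleton_kone (mulSingle_mem_orbitCone hs hs1.le i₀)
    (Pi.mulSingle_eq_one_iff.not.2 hs1.ne')

variable [CovariantClass G G (· * ·) (· ≤ ·)] [CovariantClass G G (swap (· * ·)) (· ≤ ·)]
  {n : ℤ}

lemma isNormalCone_orbitCone {H : Subgroup G} (hH : IsOIdeal H) (i₀ : I) :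
    IsNormalCone φ (orbitCone φ H i₀) where
  one_mem := ⟨le_rfl, fun _ => H.one_mem, by simp, by simp⟩
  one_le hf := hf.1
  mul_mem := by
    rintro f g ⟨hf1, hfH, hffin, hforb⟩ ⟨hg1, hgH, hgfin, hgorb⟩
    exact ⟨fun i => one_le_mul (hf1 i) (hg1 i), fun i => H.mul_mem (hfH i) (hgH i),
      (hffin.union hgfin).subset (mulSupport_mul f g),
      (mulSupport_mul f g).trans (Set.union_subset hforb hgorb)⟩
  mem_of_le := by
    rintro f g ⟨-, hfH, hffin, hforb⟩ hg1 hgf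
    have hsupp : mulSupport g ⊆ mulSupport f := fun i hgi hfi =>
      hgi (le_antisymm (hfi ▸ hgf i) (hg1 i))
    exact ⟨hg1, fun i => hH.2.1 1 H.one_mem (f i) (hfH i) (g i) (hg1 i) (hgf i),
      hffin.subset hsupp, hsupp.trans hforb⟩
  comp_mem := by
    rintro f ⟨hf1, hfH, hffin, hforb⟩
    refine ⟨fun i => hf1 (φ i), fun i => hfH _, ?_, ?_⟩ <;> rw [mulSupport_comp_eq_preimage]
    · exact hffin.preimage φ.injective.injOn
    · exact fun i hi => Equiv.Perm.sameCycle_apply_right.1 (hforb hi)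
  comp_symm_mem := by
    rintro f ⟨hf1, hfH, hffin, hforb⟩
    refine ⟨fun i => hf1 (φ.symm i), fun i => hfH _, ?_, ?_⟩ <;> rw [mulSupport_comp_eq_preimage]
    · exact hffin.preimage φ.symm.injective.injOn
    · exact fun i hi => Equiv.Perm.sameCycle_symm_apply_right.1 (hforb hi)
  conj_mem := by
    rintro f ⟨hf1, hfH, hffin, hforb⟩ c
    have hsupp : mulSupport (c * f * c⁻¹) = mulSupport f := by ext i; simp [mulSupport]
    exact ⟨fun i => one_le_conj_s14 (c i) (hf1 i), fun i => hH.1 _ (hfH i) (c i),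
      hsupp ▸ hffin, hsupp ▸ hforb⟩

lemma image_orbitCone_subset_of_least (hn : 1 ≤ n) (hdir : ∀ a b : G, ∃ c, a ≤ c ∧ b ≤ c)
    (htrans : ∀ i j : I, φ.SameCycle i j) {H : Subgroup G}
    (hH : ∀ H' : Subgroup G, IsOIdeal H' → H' ≠ ⊥ → H ≤ H') (i₀ : I)
    {J : Set (ℤ × (I → G))} (hJ : kIsNormalIdeal φ n J) (hJne : J ≠ {kone}) :
    Prod.mk 0 '' orbitCone φ H i₀ ⊆ J := by
  classical
  by_cases h0 : ∃ p ∈ J, p.1 ≠ 0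
  · obtain ⟨p, hp, hp0⟩ := h0
    exact hJ.1.image_subset_of_fst_ne_zero hn hp hp0 fun f hf => hf.1
  push Not at h0
  have hC := hJ.isNormalCone_preimage hn hdir
  obtain ⟨f, hf, hf1⟩ := hJ.1.exists_ne_one hn hJne h0
  have hHC := hH _ (Submonoid.isOIdeal_convexSubgroup fun _ hm => hC.conj_mem_mulSingleSubmonoid hm)
    (hC.convexSubgroup_ne_bot htrans hf hf1)
  rintro _ ⟨g, ⟨hg1, hgH, hgfin, -⟩, rfl⟩
  exact hC.mem_of_forall_mulSingle_mem hg1 hgfin fun i =>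
    hC.mulSingle_mem_of_mem_convexSubgroup (hHC (hgH i)) (hg1 i) i

lemma hasLeastOIdeal_and_sameCycle_of_isLeast (hn : 1 ≤ n)
    (hdir : ∀ a b : G, ∃ c, a ≤ c ∧ b ≤ c) (hG : ∃ g : G, g ≠ 1) (i₀ : I)
    {J : Set (ℤ × (I → G))} (hJ : kIsNormalIdeal φ n J) (hJne : J ≠ {kone})
    (hJleast : ∀ J', kIsNormalIdeal φ n J' → J' ≠ {kone} → J ⊆ J') :
    HasLeastOIdeal G ∧ ∀ i j : I, φ.SameCycle i j := by
  classical
  have hsub : ∀ H : Subgroup G, IsOIdeal H → H ≠ ⊥ → ∀ i, J ⊆ Prod.mk 0 '' orbitCone φ H i :=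
    fun H hH hne i => hJleast _ ((isNormalCone_orbitCone hH i).kIsNormalIdeal_image hn)
      (image_orbitCone_ne_singleton hH hne i)
  have hcone : ∀ H : Subgroup G, IsOIdeal H → H ≠ ⊥ → ∀ i, Prod.mk 0 ⁻¹' J ⊆ orbitCone φ H i :=
    fun H hH hne i => (Set.preimage_mono (hsub H hH hne i)).trans
      (Set.preimage_image_eq _ (Prod.mk_right_injective 0)).subset
  have htop : IsOIdeal (⊤ : Subgroup G) := isOIdeal_top hdir
  have htop_ne : (⊤ : Subgroup G) ≠ ⊥ := by
    obtain ⟨g, hg⟩ := hG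
    have := nontrivial_of_ne g 1 hg
    exact top_ne_bot
  have h0 : ∀ p ∈ J, p.1 = 0 := fun p hp => by
    obtain ⟨f, -, rfl⟩ := hsub ⊤ htop htop_ne i₀ hp
    rfl
  obtain ⟨f, hf, hf1⟩ := hJ.1.exists_ne_one hn hJne h0
  obtain ⟨l, hl⟩ := Function.ne_iff.1 hf1
  -- `f` lies in the cone of the orbit of every `i`, so `l` lies in every orbit.
  have horbit : ∀ i, φ.SameCycle i l := fun i => (hcone ⊤ htop htop_ne i hf).2.2.2 hl
  have htrans : ∀ i j : I, φ.SameCycle i j := fun i j => (horbit i).trans (horbit j).symm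
  have hC := hJ.isNormalCone_preimage hn hdir
  refine ⟨⟨_, Submonoid.isOIdeal_convexSubgroup fun _ hm => hC.conj_mem_mulSingleSubmonoid hm,
    hC.convexSubgroup_ne_bot htrans hf hf1, fun H hH hne =>
      Submonoid.convexSubgroup_le hH fun m hm => ?_⟩, htrans⟩
  simpa using (hcone H hH hne i₀ (hm i₀)).2.1 i₀

end OrbitCone

theorem stmt14_general [Group G] [PartialOrder G]
    [CovariantClass G G (· * ·) (· ≤ ·)] [CovariantClass G G (swap (· * ·)) (· ≤ ·)]
    (hG : ∃ g : G, g ≠ 1)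
    (hdir : ∀ a b : G, ∃ c, a ≤ c ∧ b ≤ c)
    (hI : Nonempty I) (φ : Equiv.Perm I) (n : ℤ) (hn : 1 ≤ n) :
    (HasLeastOIdeal G ∧ ∀ i j : I, ∃ m : ℤ, (φ ^ m) i = j) ↔
      HasLeastNormalIdeal (G := G) φ n := by
  obtain ⟨i₀⟩ := hI
  constructor
  · rintro ⟨⟨H, hH, hHne, hHleast⟩, htrans⟩
    exact ⟨_, (isNormalCone_orbitCone hH i₀).kIsNormalIdeal_image hn,
      image_orbitCone_ne_singleton hH hHne i₀,
      fun J hJ hJne => image_orbitCone_subset_of_least hn hdir htrans hHleast i₀ hJ hJne⟩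
  · rintro ⟨J, hJ, hJne, hJleast⟩
    exact hasLeastOIdeal_and_sameCycle_of_isLeast hn hdir hG i₀ hJ hJne hJleast

/-- for a nontrivial directed po-group `G` with RDP₁, a nonempty `I`,
a bijection `φ` and `n ≥ 1`, the following are equivalent: (1) `G` possesses a least
nontrivial o-ideal and all indices are connected by powers of `φ`; (2) `E = [0̄, u_n]`
possesses a least nontrivial normal ideal. -/
theorem stmt14 [Group G] [PartialOrder G]
    [CovariantClass G G (· * ·) (· ≤ ·)] [CovariantClass G G (swap (· * ·)) (· ≤ ·)]
    (hG : ∃ g : G, g ≠ 1)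
    (hdir : ∀ a b : G, ∃ c, a ≤ c ∧ b ≤ c)
    (hRDP1 : RDP1rel ((· ≤ ·) : G → G → Prop) (· * ·) 1)
    (hI : Nonempty I) (φ : Equiv.Perm I) (n : ℤ) (hn : 1 ≤ n) :
    (HasLeastOIdeal G ∧ ∀ i j : I, ∃ m : ℤ, (φ ^ m) i = j) ↔
      HasLeastNormalIdeal (G := G) φ n :=
  stmt14_general hG hdir hI φ n hn
end
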